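/- Let $k : V \times V \to \mathbb{R}$ be positive definite with RKHS $\mathscr{H}$, let $F \subseteq V$ be finite with $x_1 \in F$ and $K_F$ invertible, and suppose $\delta_{x_1} \in \mathscr{H}$. Then $(K_F^{-1}\delta_{x_1})(x_1) = \|P_F \delta_{x_1}\|_{\mathscr{H}}^2$, i.e., the $(x_1,x_1)$ entry of the inverse Gram matrix equals the squared norm of the projection of the point mass onto $\mathrm{span}\{k_x : x \in F\}$. -/

import Mathlib

open Matrix

/-- Setting as in Statement 2: `k` real positive definite on `V`
with RKHS `H` (kernel vectors `K x`, `⟪K x, K y⟫ = k x y`), `F` finite,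
`x1 ∈ F`, Gram matrix `KF` invertible, `δ_{x1} ∈ H` represented by `g`.
If `w` is the orthogonal projection of `g` onto `span {K x : x ∈ F}`
(characterized by `w ∈ span` and `g - w ⊥ span`), then
`(KF⁻¹ δ_{x1}) x1 = ‖w‖²`. -/
theorem stmt_3 {V H : Type*} [DecidableEq V]
    [NormedAddCommGroup H] [InnerProductSpace ℝ H] [CompleteSpace H]
    (k : V → V → ℝ) (K : V → H)
    (hk : ∀ x y, (inner ℝ (K x) (K y) : ℝ) = k x y)
    (F : Finset V) (x1 : V) (hx1 : x1 ∈ F)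
    (KF : Matrix F F ℝ) (hKF : ∀ i j : F, KF i j = k i j)
    (hinv : IsUnit KF)
    (g : H) (hg : ∀ x, (inner ℝ (K x) g : ℝ) = if x = x1 then 1 else 0)
    (w : H)
    (hw_mem : w ∈ Submodule.span ℝ (K '' (F : Set V)))
    (hw_perp : g - w ∈ (Submodule.span ℝ (K '' (F : Set V)))ᗮ) :
    (KF⁻¹ *ᵥ fun i : F => if (i : V) = x1 then (1 : ℝ) else 0) ⟨x1, hx1⟩
      = ‖w‖ ^ 2 := by
  classical
  -- inner products of kernel vectors with w
  have hKw : ∀ x ∈ F, (inner ℝ (K x) w : ℝ) = if x = x1 then 1 else 0 := by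
    intro x hx
    have hmem : K x ∈ Submodule.span ℝ (K '' (F : Set V)) :=
      Submodule.subset_span ⟨x, by simpa using hx, rfl⟩
    have h0 : (inner ℝ (K x) (g - w) : ℝ) = 0 :=
      (Submodule.mem_orthogonal _ _).1 hw_perp (K x) hmem
    have := inner_sub_right (𝕜 := ℝ) (K x) g w
    rw [h0] at this
    have : (inner ℝ (K x) w : ℝ) = inner ℝ (K x) g := by linarith
    rw [this, hg]
  -- get coefficients for w
  obtain ⟨a, hsum⟩ : ∃ a : F → ℝ, w = ∑ i : F, a i • K i := by
    rw [Finsupp.mem_span_image_iff_linearCombination] at hw_mem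
    obtain ⟨l, hl, hlw⟩ := hw_mem
    refine ⟨fun i => l i, ?_⟩
    rw [← hlw, Finsupp.linearCombination_apply, Finsupp.sum]
    rw [Finset.sum_subset ((Finsupp.mem_supported _ _).mp hl)]
    · exact (Finset.sum_attach F fun i => l i • K i).symm
    · intro x _ hx
      simp [Finsupp.notMem_support_iff.mp hx]
  have hinner_w : ∀ j : F, (inner ℝ (K j) w : ℝ) = ∑ i : F, k j i * a i := by
    intro j
    rw [hsum, inner_sum]
    congr 1; ext i
    rw [real_inner_smul_right, hk, mul_comm]
  -- KF *ᵥ a = δ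
  have hmul : KF *ᵥ a = fun i : F => if (i : V) = x1 then (1 : ℝ) else 0 := by
    funext j
    have := hinner_w j
    rw [hKw j j.2] at this
    simp only [mulVec, dotProduct, hKF]
    exact this.symm
  have ha : KF⁻¹ *ᵥ (fun i : F => if (i : V) = x1 then (1 : ℝ) else 0) = a := by
    rw [← hmul, mulVec_mulVec, (Matrix.isUnit_iff_isUnit_det KF).mp hinv
      |> Matrix.nonsing_inv_mul KF, one_mulVec]
  rw [ha]
  -- norm computation
  have hww : (inner ℝ w w : ℝ) = a ⟨x1, hx1⟩ := by
    nth_rewrite 1 [hsum]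
    rw [sum_inner]
    have : ∀ i : F, (inner ℝ (a i • K (i : V)) w : ℝ)
        = if (i : V) = x1 then a i else 0 := by
      intro i
      rw [real_inner_smul_left, hKw i i.2]
      split <;> simp
    have he : ∀ i : F, (if (i : V) = x1 then a i else 0)
        = (if i = ⟨x1, hx1⟩ then a i else 0) := fun i => by
      congr 1
      simp [Subtype.ext_iff]
    rw [Finset.sum_congr rfl fun i _ => (this i).trans (he i), Finset.sum_ite_eq']
    simp
  rw [← real_inner_self_eq_norm_sq, hww]
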